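/- For the barbell graph Markov chain with even n ≥ 8 and ε ∈ (0,1), splitting the left module strictly increases directed modularity: for the three-module partition C_{1,a} = {l_0,…,l_{n/2−1}}, C_{1,b} = {l_{n/2},…,l_{n−1}}, C_2 = {r_0,…,r_{n−1}}, one has Q(C_{1,a}, C_{1,b}, C_2) > Q(C_1, C_2), where C_1 = {l_0,…,l_{n−1}}. Hence maximization of the directed modularity Q does not return the partition {C_1, C_2} for n ≥ 8. -/

import Mathlib

/-- Transition matrix of the barbell graph Markov chain: two directed `n`-cycles
(left = `Sum.inl`, right = `Sum.inr`) joined at `l₀, r₀` by an edge of weight `ε`. -/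
noncomputable def barbellP (n : ℕ) (ε : ℝ) :
    Matrix (Fin n ⊕ Fin n) (Fin n ⊕ Fin n) ℝ :=
  Matrix.of fun x y =>
    match x, y with
    | Sum.inl i, Sum.inl j =>
        if i.val ≠ 0 ∧ j.val = (i.val + 1) % n then 1
        else if i.val = 0 ∧ j.val = 1 then 1 / (1 + ε) else 0
    | Sum.inl i, Sum.inr j => if i.val = 0 ∧ j.val = 0 then ε / (1 + ε) else 0
    | Sum.inr i, Sum.inl j => if i.val = 0 ∧ j.val = 0 then ε / (1 + ε) else 0
    | Sum.inr i, Sum.inr j =>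
        if i.val ≠ 0 ∧ j.val = (i.val + 1) % n then 1
        else if i.val = 0 ∧ j.val = 1 then 1 / (1 + ε) else 0

/-- The stationary distribution of the barbell graph Markov chain. -/
noncomputable def barbellPi (n : ℕ) (ε : ℝ) : Fin n ⊕ Fin n → ℝ := fun x =>
  match x with
  | Sum.inl i => if i.val = 0 then (1 + ε) / (2 * ((n : ℝ) + ε)) else 1 / (2 * ((n : ℝ) + ε))
  | Sum.inr i => if i.val = 0 then (1 + ε) / (2 * ((n : ℝ) + ε)) else 1 / (2 * ((n : ℝ) + ε))

/-- The modularity-type functional `∑ m ∑ x ∑ y χ m x * (A x y - π x * π y) * χ m y`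
of a (fuzzy) partition given by the functions `χ m` with respect to the flow-type
matrix `A` and the distribution `π`. -/
noncomputable def modularity {V : Type*} [Fintype V] {M : ℕ}
    (A : V → V → ℝ) (π : V → ℝ) (χ : Fin M → V → ℝ) : ℝ :=
  ∑ m, ∑ x, ∑ y, χ m x * (A x y - π x * π y) * χ m y

/-- Indicator functions of the two-module partition `C₁ = {l₀,…,l_{n-1}}`,
`C₂ = {r₀,…,r_{n-1}}` of the barbell graph. -/
def barbellChi2 (n : ℕ) : Fin 2 → (Fin n ⊕ Fin n) → ℝ := fun m x =>
  match x with
  | Sum.inl _ => if m = 0 then 1 else 0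
  | Sum.inr _ => if m = 1 then 1 else 0

/-- Indicator functions of the three-module partition `C_{1,a} = {l₀,…,l_{n/2-1}}`,
`C_{1,b} = {l_{n/2},…,l_{n-1}}`, `C₂ = {r₀,…,r_{n-1}}` of the barbell graph. -/
def barbellChi3 (n : ℕ) : Fin 3 → (Fin n ⊕ Fin n) → ℝ := fun m x =>
  match x with
  | Sum.inl i => if m = 0 ∧ i.val < n / 2 then 1
                 else if m = 1 ∧ n / 2 ≤ i.val then 1 else 0
  | Sum.inr _ => if m = 2 then 1 else 0

/-! ### Auxiliary definitions for the proof -/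

/-- Natural-number-indexed version of the stationary weights on one cycle. -/
noncomputable def bw (n : ℕ) (ε : ℝ) : ℕ → ℝ := fun a =>
  if a = 0 then (1 + ε) / (2 * ((n : ℝ) + ε)) else 1 / (2 * ((n : ℝ) + ε))

/-- Natural-number-indexed version of the within-cycle transition probabilities. -/
noncomputable def bp (n : ℕ) (ε : ℝ) : ℕ → ℕ → ℝ := fun a b =>
  if a ≠ 0 ∧ b = (a + 1) % n then 1
  else if a = 0 ∧ b = 1 then 1 / (1 + ε) else 0

/-- The coefficient given by the difference of the two partitions' indicator sums. -/
noncomputable def bg (n k : ℕ) : (Fin n ⊕ Fin n) → (Fin n ⊕ Fin n) → ℝ := fun x y =>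
  match x, y with
  | Sum.inl i, Sum.inl j => if (i.val < k ↔ j.val < k) then 0 else -1
  | _, _ => 0

/-- The summand of the modularity difference, in ℕ-indexed form. -/
noncomputable def bc (n k : ℕ) (ε : ℝ) : ℕ → ℕ → ℝ := fun a b =>
  (if (a < k ↔ b < k) then 0 else -1) *
    (bw n ε a * bp n ε a b - bw n ε a * bw n ε b)

/-- For even `n ≥ 8`, splitting the left module strictly increases the
directed modularity of the barbell graph, so `Q`-maximization does not return `{C₁, C₂}`. -/
theorem barbell_dirModularity_split_better (n : ℕ) (hn : 8 ≤ n) (hn2 : Even n)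
    (ε : ℝ) (hε0 : 0 < ε) (hε1 : ε < 1) :
    modularity (fun x y => barbellPi n ε x * barbellP n ε x y) (barbellPi n ε)
        (barbellChi3 n)
      > modularity (fun x y => barbellPi n ε x * barbellP n ε x y) (barbellPi n ε)
        (barbellChi2 n) := by
  obtain ⟨k, hkk⟩ := hn2
  have hkn : n = 2 * k := by omega
  have hk4 : 4 ≤ k := by omega
  have hnk : n / 2 = k := by omega
  have hn0 : 0 < n := by omega
  rw [gt_iff_lt, ← sub_pos]
  -- reorder the sums in the modularity functional
  have hre : ∀ (M : ℕ) (χ : Fin M → (Fin n ⊕ Fin n) → ℝ),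
      modularity (fun x y => barbellPi n ε x * barbellP n ε x y) (barbellPi n ε) χ
        = ∑ x, ∑ y, ∑ m, χ m x *
            (barbellPi n ε x * barbellP n ε x y - barbellPi n ε x * barbellPi n ε y) * χ m y := by
    intro M χ
    rw [modularity, Finset.sum_comm]
    exact Finset.sum_congr rfl fun x _ => Finset.sum_comm
  rw [hre, hre, ← Finset.sum_sub_distrib]
  simp only [← Finset.sum_sub_distrib]
  -- pointwise: the difference of indicator sums factors
  have hpt : ∀ (e : ℝ) (x y : Fin n ⊕ Fin n),
      ((∑ m, barbellChi3 n m x * e * barbellChi3 n m y)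
        - ∑ m, barbellChi2 n m x * e * barbellChi2 n m y)
      = bg n k x y * e := by
    intro e x y
    rcases x with i | i <;> rcases y with j | j <;>
      simp [barbellChi2, barbellChi3, bg, Fin.sum_univ_three, Fin.sum_univ_two, hnk]
    by_cases hi : i.val < k <;> by_cases hj : j.val < k <;>
      simp [hi, hj, not_le.mpr, not_lt.mp, hi, hj]
  have hstep : (∑ x, ∑ y, ((∑ m, barbellChi3 n m x *
        (barbellPi n ε x * barbellP n ε x y - barbellPi n ε x * barbellPi n ε y) * barbellChi3 n m y)
      - ∑ m, barbellChi2 n m x *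
        (barbellPi n ε x * barbellP n ε x y - barbellPi n ε x * barbellPi n ε y) * barbellChi2 n m y))
      = ∑ x, ∑ y, bg n k x y *
        (barbellPi n ε x * barbellP n ε x y - barbellPi n ε x * barbellPi n ε y) :=
    Finset.sum_congr rfl fun x _ => Finset.sum_congr rfl fun y _ => hpt _ x y
  rw [hstep]
  -- split the sums over the disjoint union; only the left-left block survives
  simp only [Fintype.sum_sum_type]
  have hrzero : ∀ (x : Fin n ⊕ Fin n) (y : Fin n), bg n k x (Sum.inr y) = 0 := by
    intro x y; rcases x with i | i <;> rfl
  have hrzero' : ∀ (y : Fin n ⊕ Fin n) (i : Fin n), bg n k (Sum.inr i) y = 0 := by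
    intro y i; rcases y with j | j <;> rfl
  simp only [hrzero, hrzero', zero_mul, Finset.sum_const_zero, add_zero, zero_add]
  -- convert the Fin-indexed double sum into a range-indexed one
  have hterm : ∀ i j : Fin n,
      bg n k (Sum.inl i) (Sum.inl j) *
        (barbellPi n ε (Sum.inl i) * barbellP n ε (Sum.inl i) (Sum.inl j)
          - barbellPi n ε (Sum.inl i) * barbellPi n ε (Sum.inl j))
      = bc n k ε i.val j.val := by
    intro i j
    simp only [bg, bc, bw, bp, barbellPi, barbellP, Matrix.of_apply]
  have hdouble : (∑ i : Fin n, ∑ j : Fin n,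
      bg n k (Sum.inl i) (Sum.inl j) *
        (barbellPi n ε (Sum.inl i) * barbellP n ε (Sum.inl i) (Sum.inl j)
          - barbellPi n ε (Sum.inl i) * barbellPi n ε (Sum.inl j)))
      = ∑ a ∈ Finset.range n, ∑ b ∈ Finset.range n, bc n k ε a b := by
    rw [← Fin.sum_univ_eq_sum_range (fun a => ∑ b ∈ Finset.range n, bc n k ε a b) n]
    refine Finset.sum_congr rfl fun i _ => ?_
    rw [← Fin.sum_univ_eq_sum_range (fun b => bc n k ε i.val b) n]
    exact Finset.sum_congr rfl fun j _ => hterm i j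
  rw [hdouble]
  -- numeric abbreviations
  have hD0 : (0:ℝ) < 2 * ((n:ℝ) + ε) := by positivity
  have hDne : (2 * ((n:ℝ) + ε)) ≠ 0 := ne_of_gt hD0
  have hkR : (4:ℝ) ≤ (k:ℝ) := by exact_mod_cast hk4
  have hnR : (n:ℝ) = 2 * (k:ℝ) := by exact_mod_cast hkn
  -- the two half-sums of stationary weights
  have hSa : ∑ a ∈ Finset.range n, (if a < k then bw n ε a else 0)
      = ((k:ℝ) + ε) / (2 * ((n:ℝ) + ε)) := by
    rw [Finset.range_eq_Ico, ← Finset.sum_Ico_consecutive _ (Nat.zero_le k) (by omega : k ≤ n)]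
    have h2 : ∑ a ∈ Finset.Ico k n, (if a < k then bw n ε a else 0) = 0 :=
      Finset.sum_eq_zero fun a ha => if_neg (by rw [Finset.mem_Ico] at ha; omega)
    have h1 : ∑ a ∈ Finset.Ico 0 k, (if a < k then bw n ε a else 0)
        = ∑ a ∈ Finset.Ico 0 k, bw n ε a :=
      Finset.sum_congr rfl fun a ha => if_pos (by rw [Finset.mem_Ico] at ha; omega)
    rw [h1, h2, add_zero, ← Finset.range_eq_Ico]
    have h3 : ∀ a, bw n ε a = 1 / (2 * ((n:ℝ) + ε))
        + (if a = 0 then (1 + ε) / (2 * ((n:ℝ) + ε)) - 1 / (2 * ((n:ℝ) + ε)) else 0) := by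
      intro a; unfold bw; split_ifs <;> ring
    rw [Finset.sum_congr rfl fun a _ => h3 a, Finset.sum_add_distrib, Finset.sum_const,
      Finset.card_range, Finset.sum_ite_eq' (Finset.range k) 0,
      if_pos (Finset.mem_range.mpr (by omega : 0 < k)), nsmul_eq_mul]
    field_simp
    ring
  have hSb : ∑ a ∈ Finset.range n, (if a < k then 0 else bw n ε a)
      = (k:ℝ) / (2 * ((n:ℝ) + ε)) := by
    rw [Finset.range_eq_Ico, ← Finset.sum_Ico_consecutive _ (Nat.zero_le k) (by omega : k ≤ n)]
    have h1 : ∑ a ∈ Finset.Ico 0 k, (if a < k then (0:ℝ) else bw n ε a) = 0 :=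
      Finset.sum_eq_zero fun a ha => if_pos (by rw [Finset.mem_Ico] at ha; omega)
    have h2 : ∑ a ∈ Finset.Ico k n, (if a < k then (0:ℝ) else bw n ε a)
        = ∑ a ∈ Finset.Ico k n, 1 / (2 * ((n:ℝ) + ε)) := by
      refine Finset.sum_congr rfl fun a ha => ?_
      rw [Finset.mem_Ico] at ha
      rw [if_neg (by omega)]
      unfold bw
      rw [if_neg (by omega)]
    rw [h1, h2, zero_add, Finset.sum_const, Nat.card_Ico, nsmul_eq_mul]
    have : ((n - k : ℕ) : ℝ) = (k:ℝ) := by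
      have : n - k = k := by omega
      rw [this]
    rw [this]
    ring
  -- the cross-flow term
  have hinner : ∀ a ∈ Finset.range n,
      ∑ b ∈ Finset.range n, (if (a < k ↔ b < k) then (0:ℝ) else 1) * (bw n ε a * bp n ε a b)
      = (if a = k - 1 ∨ a = n - 1 then 1 / (2 * ((n:ℝ) + ε)) else 0) := by
    intro a ha
    rw [Finset.mem_range] at ha
    by_cases ha0 : a = 0
    · subst ha0
      rw [if_neg (by omega)]
      refine Finset.sum_eq_zero fun b hb => ?_
      rcases Nat.lt_or_ge b k with hbk | hbk
      · rw [if_pos (by omega), zero_mul]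
      · have hbp : bp n ε 0 b = 0 := by
          unfold bp
          rw [if_neg (by simp), if_neg (by omega)]
        rw [hbp, mul_zero, mul_zero]
    · have hq : ∀ b, (if (a < k ↔ b < k) then (0:ℝ) else 1) * (bw n ε a * bp n ε a b)
          = if b = (a + 1) % n
            then (if (a < k ↔ (a + 1) % n < k) then (0:ℝ) else 1) * bw n ε a else 0 := by
        intro b
        by_cases hb : b = (a + 1) % n
        · subst hb
          have hbp : bp n ε a ((a + 1) % n) = 1 := by
            unfold bp
            rw [if_pos ⟨ha0, rfl⟩]
          rw [hbp, if_pos rfl]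
          ring
        · have hbp : bp n ε a b = 0 := by
            unfold bp
            rw [if_neg (fun h => hb h.2), if_neg (fun h => ha0 h.1)]
          rw [hbp, if_neg hb]
          ring
      rw [Finset.sum_congr rfl fun b _ => hq b,
        Finset.sum_ite_eq' (Finset.range n) ((a + 1) % n),
        if_pos (Finset.mem_range.mpr (Nat.mod_lt _ hn0))]
      by_cases han : a = n - 1
      · have h1 : (a + 1) % n = 0 := by
          have h : a + 1 = n := by omega
          rw [h, Nat.mod_self]
        rw [h1, if_neg (by omega), if_pos (Or.inr han), one_mul]
        unfold bw
        rw [if_neg (by omega)]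
      · have h1 : (a + 1) % n = a + 1 := Nat.mod_eq_of_lt (by omega)
        rw [h1]
        by_cases hak : a = k - 1
        · rw [if_neg (by omega), if_pos (Or.inl hak), one_mul]
          unfold bw
          rw [if_neg (by omega)]
        · rw [if_pos (by omega), zero_mul, if_neg (by omega)]
  have hflow : ∑ a ∈ Finset.range n,
      (if a = k - 1 ∨ a = n - 1 then 1 / (2 * ((n:ℝ) + ε)) else 0)
      = 2 / (2 * ((n:ℝ) + ε)) := by
    have hsplit : ∀ a, (if a = k - 1 ∨ a = n - 1 then 1 / (2 * ((n:ℝ) + ε)) else 0)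
        = (if a = k - 1 then 1 / (2 * ((n:ℝ) + ε)) else 0)
          + (if a = n - 1 then 1 / (2 * ((n:ℝ) + ε)) else 0) := by
      intro a
      by_cases h1 : a = k - 1 <;> by_cases h2 : a = n - 1 <;>
        simp [h1, h2] <;> omega
    rw [Finset.sum_congr rfl fun a _ => hsplit a, Finset.sum_add_distrib,
      Finset.sum_ite_eq' (Finset.range n) (k - 1),
      Finset.sum_ite_eq' (Finset.range n) (n - 1),
      if_pos (Finset.mem_range.mpr (by omega : k - 1 < n)),
      if_pos (Finset.mem_range.mpr (by omega : n - 1 < n))]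
    ring
  -- decompose the summand
  have hbc : ∀ a b : ℕ, bc n k ε a b =
      (if a < k then bw n ε a else 0) * (if b < k then 0 else bw n ε b)
    + (if a < k then 0 else bw n ε a) * (if b < k then bw n ε b else 0)
    - (if (a < k ↔ b < k) then (0:ℝ) else 1) * (bw n ε a * bp n ε a b) := by
    intro a b
    unfold bc
    by_cases hab : a < k <;> by_cases hbb : b < k <;> simp [hab, hbb] <;> ring
  rw [Finset.sum_congr rfl fun a _ => Finset.sum_congr rfl fun b _ => hbc a b]
  have hsum : ∑ a ∈ Finset.range n, ∑ b ∈ Finset.range n,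
      ((if a < k then bw n ε a else 0) * (if b < k then 0 else bw n ε b)
        + (if a < k then 0 else bw n ε a) * (if b < k then bw n ε b else 0)
        - (if (a < k ↔ b < k) then (0:ℝ) else 1) * (bw n ε a * bp n ε a b))
      = (∑ a ∈ Finset.range n, (if a < k then bw n ε a else 0))
          * (∑ b ∈ Finset.range n, (if b < k then 0 else bw n ε b))
        + (∑ a ∈ Finset.range n, (if a < k then 0 else bw n ε a))
          * (∑ b ∈ Finset.range n, (if b < k then bw n ε b else 0))
        - ∑ a ∈ Finset.range n, ∑ b ∈ Finset.range n,
            (if (a < k ↔ b < k) then (0:ℝ) else 1) * (bw n ε a * bp n ε a b) := by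
    simp only [Finset.sum_sub_distrib, Finset.sum_add_distrib, ← Finset.mul_sum,
      ← Finset.sum_mul]
  rw [hsum, Finset.sum_congr rfl hinner, hflow, hSa, hSb]
  have key : 0 < ((k:ℝ) + ε) * (k:ℝ) - 2 * ((n:ℝ) + ε) := by
    rw [hnR]; nlinarith
  have hEq : ((k:ℝ) + ε) / (2 * ((n:ℝ) + ε)) * ((k:ℝ) / (2 * ((n:ℝ) + ε)))
      + (k:ℝ) / (2 * ((n:ℝ) + ε)) * (((k:ℝ) + ε) / (2 * ((n:ℝ) + ε)))
      - 2 / (2 * ((n:ℝ) + ε))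
      = 2 * (((k:ℝ) + ε) * (k:ℝ) - 2 * ((n:ℝ) + ε)) / (2 * ((n:ℝ) + ε)) ^ 2 := by
    field_simp
    ring
  rw [hEq]
  exact div_pos (by linarith) (by positivity)
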